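/- Let Ω = ℝ^ℤ with a shift-invariant probability measure μ that is ergodic for the shift τ₁. Let Ξ = ℕ₊^ℕ and let P make the coordinates η_i i.i.d. with finite expectation, and suppose gcd{ k : P(η₁ = k) > 0 } = 1. Define T : Ω × Ξ → Ω × Ξ by T(ω, η) = (τ_{η₁}ω, shift of η). Then T is ergodic (and measure-preserving) with respect to μ ⊗ P. -/

import Mathlib

open MeasureTheory ProbabilityTheory MeasurableSpace Set
open scoped ENNReal NNReal

noncomputable section
namespace Stmt13

def sz (z : ℤ) (ω : ℤ → ℝ) : ℤ → ℝ := fun j => ω (j + z)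
def sn (η : ℕ → ℕ) : ℕ → ℕ := fun n => η (n + 1)
def pre (n : ℕ) (η : ℕ → ℕ) : Fin n → ℕ := fun i => η i
def Tsk (p : (ℤ → ℝ) × (ℕ → ℕ)) : (ℤ → ℝ) × (ℕ → ℕ) := (sz (p.2 0) p.1, sn p.2)
def Ssum (n : ℕ) (η : ℕ → ℕ) : ℤ := ∑ i ∈ Finset.range n, (η i : ℤ)

lemma sz_sz (a b : ℤ) (ω : ℤ → ℝ) : sz a (sz b ω) = sz (a + b) ω := by
  funext j; simp [sz, add_assoc]

lemma sz_zero (ω : ℤ → ℝ) : sz 0 ω = ω := by funext j; simp [sz]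

lemma measurable_sz (z : ℤ) : Measurable (sz z) :=
  measurable_pi_lambda _ fun _ => measurable_pi_apply _

def szE (z : ℤ) : (ℤ → ℝ) ≃ᵐ (ℤ → ℝ) where
  toFun := sz z
  invFun := sz (-z)
  left_inv := fun ω => by rw [sz_sz]; simp [sz_zero]
  right_inv := fun ω => by rw [sz_sz]; simp [sz_zero]
  measurable_toFun := measurable_sz z
  measurable_invFun := measurable_sz (-z)

lemma measurable_sn : Measurable sn := measurable_pi_lambda _ fun _ => measurable_pi_apply _

lemma measurable_pre (n : ℕ) : Measurable (pre n) :=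
  measurable_pi_lambda _ fun _ => measurable_pi_apply _

lemma measurable_szfun : Measurable (fun q : (ℤ → ℝ) × ℕ => sz q.2 q.1) := by
  apply measurable_from_prod_countable_left
  intro k
  exact measurable_sz k

lemma measurable_Tsk : Measurable Tsk := by
  apply Measurable.prod
  · exact measurable_szfun.comp
      ((measurable_fst).prodMk ((measurable_pi_apply 0).comp measurable_snd))
  · exact measurable_sn.comp measurable_snd

lemma sn_iter (n : ℕ) (η : ℕ → ℕ) (m : ℕ) : sn^[n] η m = η (m + n) := by
  induction n generalizing η with
  | zero => rfl
  | succ n ih => rw [Function.iterate_succ_apply, ih (sn η)]; simp [sn, add_assoc]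

lemma Tsk_iter (n : ℕ) (p : (ℤ → ℝ) × (ℕ → ℕ)) :
    Tsk^[n] p = (sz (Ssum n p.2) p.1, sn^[n] p.2) := by
  induction n generalizing p with
  | zero =>
      have : sz (Ssum 0 p.2) p.1 = p.1 := by funext j; simp [sz, Ssum]
      simp [this]
  | succ n ih =>
      rw [Function.iterate_succ_apply, ih]
      have h2 : sn^[n] (Tsk p).2 = sn^[n+1] p.2 :=
        (Function.iterate_succ_apply sn n p.2).symm
      have h1 : sz (Ssum n (Tsk p).2) (Tsk p).1 = sz (Ssum (n+1) p.2) p.1 := by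
        show sz (Ssum n (sn p.2)) (sz (p.2 0) p.1) = _
        rw [sz_sz]
        have : Ssum (n+1) p.2 = (∑ i ∈ Finset.range n, ((p.2 (i+1) : ℤ))) + (p.2 0 : ℤ) :=
          Finset.sum_range_succ' _ _
        rw [this]; rfl
      rw [Prod.ext_iff]
      exact ⟨h1, h2⟩

lemma Ssum_pre (n : ℕ) (η : ℕ → ℕ) : Ssum n η = ∑ i : Fin n, ((pre n η i : ℤ)) := by
  rw [Ssum, Finset.sum_range]; rfl

section Shift
variable {μ : Measure (ℤ → ℝ)}

lemma mp_sz (h1 : MeasurePreserving (sz 1) μ μ) (z : ℤ) :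
    MeasurePreserving (sz z) μ μ := by
  have hnat : ∀ n : ℕ, MeasurePreserving (sz (n : ℤ)) μ μ := by
    intro n
    induction n with
    | zero => simpa [funext sz_zero] using (show MeasurePreserving (fun x : ℤ → ℝ => x) μ μ from MeasurePreserving.id μ)
    | succ n ih =>
        have : sz ((n : ℤ) + 1) = sz (n : ℤ) ∘ sz 1 := by
          funext ω; exact (sz_sz _ _ _).symm ▸ by rw [Function.comp_apply, sz_sz, add_comm]
        rw [Nat.cast_add, Nat.cast_one, this]
        exact ih.comp h1
  rcases z with n | n
  · exact hnat n
  · have h0 : MeasurePreserving (szE ((n : ℤ)+1)) μ μ := by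
      have := hnat (n+1); push_cast at this; exact this
    have h := h0.symm (szE ((n : ℤ)+1))
    have he : ⇑(szE ((n : ℤ)+1)).symm = sz (Int.negSucc n) := by
      funext ω; rfl
    rwa [he] at h

end Shift

section Law
variable {P : Measure (ℕ → ℕ)} [IsProbabilityMeasure P] {ν : Measure ℕ}
  [IsProbabilityMeasure ν]

omit [IsProbabilityMeasure P] in
lemma map_sub_pi (hiid : iIndepFun (fun i (η : ℕ → ℕ) => η i) P)
    (hlaw : ∀ i : ℕ, P.map (fun η : ℕ → ℕ => η i) = ν)
    {n : ℕ} (e : Fin n → ℕ) (he : Function.Injective e) :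
    P.map (fun (η : ℕ → ℕ) (i : Fin n) => η (e i)) = Measure.pi (fun _ : Fin n => ν) := by
  refine (Measure.pi_eq fun s hs => ?_).symm
  have hF : Measurable (fun (η : ℕ → ℕ) (i : Fin n) => η (e i)) :=
    measurable_pi_lambda _ fun i => measurable_pi_apply (e i)
  rw [Measure.map_apply hF (MeasurableSet.univ_pi hs)]
  classical
  set g : ℕ → Set ℕ := fun j => ⋂ i ∈ Finset.univ.filter (fun i => e i = j), s i with hg
  have hgei : ∀ i : Fin n, g (e i) = s i := by
    intro i
    have : Finset.univ.filter (fun i' => e i' = e i) = {i} := by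
      ext i'
      simp [he.eq_iff]
    rw [hg]
    simp only [this]
    simp
  have hset : (fun (η : ℕ → ℕ) (i : Fin n) => η (e i)) ⁻¹' (univ.pi s)
      = ⋂ j ∈ Finset.univ.image e, (fun η : ℕ → ℕ => η j) ⁻¹' (g j) := by
    ext η
    simp only [mem_preimage, mem_pi, mem_univ, forall_true_left, Set.mem_iInter,
      Finset.mem_image, Finset.mem_univ, true_and]
    constructor
    · rintro hη j ⟨i, rfl⟩
      rw [hg]
      simp only [Set.mem_iInter, Finset.mem_filter, Finset.mem_univ, true_and]
      rintro i' hi'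
      exact hi' ▸ hη i'
    · intro hη i
      have := hη (e i) ⟨i, rfl⟩
      rw [hgei i] at this
      exact this
  rw [hset, hiid.measure_inter_preimage_eq_mul _ (fun j _ => MeasurableSet.of_discrete)]
  rw [Finset.prod_image (fun i _ i' _ h => he h)]
  refine Finset.prod_congr rfl fun i _ => ?_
  rw [hgei i, ← hlaw (e i), Measure.map_apply (measurable_pi_apply (e i)) (hs i)]

def cylSet : Set (Set (ℕ → ℕ)) := {B | ∃ (n : ℕ) (S : Set (Fin n → ℕ)), B = pre n ⁻¹' S}

lemma pre_lift {n m : ℕ} (hnm : n ≤ m) (S : Set (Fin n → ℕ)) :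
    pre n ⁻¹' S = pre m ⁻¹' ((fun (p : Fin m → ℕ) (i : Fin n) => p (Fin.castLE hnm i)) ⁻¹' S) :=
  rfl

lemma isPiSystem_cyl : IsPiSystem cylSet := by
  rintro B1 ⟨n, S1, rfl⟩ B2 ⟨m, S2, rfl⟩ -
  refine ⟨max n m,
    (fun (p : Fin (max n m) → ℕ) (i : Fin n) => p (Fin.castLE (le_max_left n m) i)) ⁻¹' S1
    ∩ (fun (p : Fin (max n m) → ℕ) (i : Fin m) => p (Fin.castLE (le_max_right n m) i)) ⁻¹' S2, ?_⟩
  rw [pre_lift (le_max_left n m) S1, pre_lift (le_max_right n m) S2, preimage_inter]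

lemma generateFrom_cyl :
    generateFrom cylSet = (inferInstance : MeasurableSpace (ℕ → ℕ)) := by
  apply le_antisymm
  · apply generateFrom_le
    rintro B ⟨n, S, rfl⟩
    exact measurable_pre n MeasurableSet.of_discrete
  · rw [show (inferInstance : MeasurableSpace (ℕ → ℕ)) = MeasurableSpace.pi from rfl,
      MeasurableSpace.pi]
    refine iSup_le fun i => ?_
    intro t ht
    obtain ⟨A, -, rfl⟩ := ht
    refine measurableSet_generateFrom ?_
    exact ⟨i + 1, {p : Fin (i+1) → ℕ | p ⟨i, Nat.lt_succ_self i⟩ ∈ A}, rfl⟩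

lemma map_sn (hiid : iIndepFun (fun i (η : ℕ → ℕ) => η i) P)
    (hlaw : ∀ i : ℕ, P.map (fun η : ℕ → ℕ => η i) = ν) :
    P.map sn = P := by
  have hmsn : Measurable (sn : (ℕ → ℕ) → ℕ → ℕ) := measurable_sn
  refine ext_of_generate_finite cylSet generateFrom_cyl.symm isPiSystem_cyl ?_ ?_
  · rintro B ⟨n, S, rfl⟩
    have hSm : MeasurableSet S := MeasurableSet.of_discrete
    have e1 := map_sub_pi hiid hlaw (fun i : Fin n => (i : ℕ) + 1)
      (fun i i' h => Fin.val_injective (Nat.succ_injective h))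
    have e0 := map_sub_pi hiid hlaw (fun i : Fin n => (i : ℕ)) Fin.val_injective
    have h1 : sn ⁻¹' (pre n ⁻¹' S) = (fun (η : ℕ → ℕ) (i : Fin n) => η ((i : ℕ) + 1)) ⁻¹' S := rfl
    have h0 : pre n ⁻¹' S = (fun (η : ℕ → ℕ) (i : Fin n) => η ((i : ℕ))) ⁻¹' S := rfl
    rw [Measure.map_apply hmsn (measurable_pre n hSm), h1,
      ← Measure.map_apply (measurable_pi_lambda _ fun i => measurable_pi_apply _) hSm, e1,
      h0, ← Measure.map_apply (measurable_pi_lambda _ fun i => measurable_pi_apply _) hSm, e0]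
  · rw [Measure.map_apply hmsn MeasurableSet.univ]
    simp

lemma map_sn_iter (hiid : iIndepFun (fun i (η : ℕ → ℕ) => η i) P)
    (hlaw : ∀ i : ℕ, P.map (fun η : ℕ → ℕ => η i) = ν) (n : ℕ) :
    P.map (sn^[n]) = P := by
  induction n with
  | zero => simp
  | succ n ih =>
      rw [Function.iterate_succ, ← Measure.map_map (measurable_sn.iterate n) measurable_sn,
        map_sn hiid hlaw, ih]

def coordA (i : ℕ) : MeasurableSpace (ℕ → ℕ) :=
  MeasurableSpace.comap (fun η : ℕ → ℕ => η i) inferInstance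

lemma map_pair {γ : Type*} [mγ : MeasurableSpace γ]
    (hiid : iIndepFun (fun i (η : ℕ → ℕ) => η i) P)
    (n : ℕ) (hP : P.map (sn^[n]) = P) (f : (ℕ → ℕ) → γ)
    (hf : MeasurableSpace.comap f mγ ≤ ⨆ i ∈ Set.Iio n, coordA i) :
    P.map (fun η => (f η, sn^[n] η)) = (P.map f).prod P := by
  have hfull : (⨆ i ∈ Set.Iio n, coordA i) ≤ (inferInstance : MeasurableSpace (ℕ → ℕ)) :=
    iSup_le fun i => iSup_le fun _ => (measurable_pi_apply i).comap_le
  have hfm : Measurable f := Measurable.of_comap_le (hf.trans hfull)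
  have htail_eq : MeasurableSpace.comap (sn^[n]) (inferInstance : MeasurableSpace (ℕ → ℕ))
      = ⨆ m : ℕ, coordA (m + n) := by
    conv_lhs => rw [show (inferInstance : MeasurableSpace (ℕ → ℕ)) = MeasurableSpace.pi from rfl,
      MeasurableSpace.pi, MeasurableSpace.comap_iSup]
    refine iSup_congr fun m => ?_
    rw [MeasurableSpace.comap_comp]
    congr 1
    funext η
    exact sn_iter n η m
  have htail_le : MeasurableSpace.comap (sn^[n]) (inferInstance : MeasurableSpace (ℕ → ℕ))
      ≤ ⨆ i ∈ (Set.Iio n)ᶜ, coordA i := by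
    rw [htail_eq]
    refine iSup_le fun m => ?_
    exact le_iSup_of_le (m + n) (le_iSup_of_le (by simp) le_rfl)
  have hindep : Indep (⨆ i ∈ Set.Iio n, coordA i) (⨆ i ∈ (Set.Iio n)ᶜ, coordA i) P :=
    indep_biSup_compl (fun i => (measurable_pi_apply i).comap_le) hiid.iIndep (Set.Iio n)
  have hIf : IndepFun f (sn^[n]) P := by
    rw [indepFun_iff_measure_inter_preimage_eq_mul]
    intro s t hs ht
    exact (Indep_iff _ _ _).1 hindep _ _ (hf _ ⟨s, hs, rfl⟩) (htail_le _ ⟨t, ht, rfl⟩)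
  rw [(indepFun_iff_map_prod_eq_prod_map_map hfm.aemeasurable
    (measurable_sn.iterate n).aemeasurable).1 hIf, hP]

lemma comap_pre_le (n : ℕ) :
    MeasurableSpace.comap (pre n) (inferInstance : MeasurableSpace (Fin n → ℕ))
      ≤ ⨆ i ∈ Set.Iio n, coordA i := by
  conv_lhs => rw [show (inferInstance : MeasurableSpace (Fin n → ℕ)) = MeasurableSpace.pi from rfl,
    MeasurableSpace.pi, MeasurableSpace.comap_iSup]
  refine iSup_le fun i => ?_
  rw [MeasurableSpace.comap_comp]
  exact le_iSup_of_le (i : ℕ) (le_iSup_of_le (by simp [i.isLt]) le_rfl)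

lemma comap_eval0_le :
    MeasurableSpace.comap (fun η : ℕ → ℕ => η 0) (inferInstance : MeasurableSpace ℕ)
      ≤ ⨆ i ∈ Set.Iio 1, coordA i :=
  le_iSup_of_le 0 (le_iSup_of_le (by simp) le_rfl)

lemma law_pre_tail (hiid : iIndepFun (fun i (η : ℕ → ℕ) => η i) P)
    (hlaw : ∀ i : ℕ, P.map (fun η : ℕ → ℕ => η i) = ν) (n : ℕ) :
    P.map (fun η => (pre n η, sn^[n] η)) = (Measure.pi (fun _ : Fin n => ν)).prod P := by
  rw [map_pair hiid n (map_sn_iter hiid hlaw n) (pre n) (comap_pre_le n)]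
  congr 1
  exact map_sub_pi hiid hlaw (fun i : Fin n => (i : ℕ)) Fin.val_injective

lemma law_eval0_tail (hiid : iIndepFun (fun i (η : ℕ → ℕ) => η i) P)
    (hlaw : ∀ i : ℕ, P.map (fun η : ℕ → ℕ => η i) = ν) :
    P.map (fun η => (η 0, sn η)) = ν.prod P := by
  have h := map_pair hiid 1 (map_sn_iter hiid hlaw 1) (fun η : ℕ → ℕ => η 0) comap_eval0_le
  simp only [Function.iterate_one] at h
  rw [h, hlaw 0]

end Law


section MP
variable {μ : Measure (ℤ → ℝ)} [IsProbabilityMeasure μ] {P : Measure (ℕ → ℕ)}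
  [IsProbabilityMeasure P] {ν : Measure ℕ} [IsProbabilityMeasure ν]

lemma measurable_eval0_sn : Measurable (fun η : ℕ → ℕ => (η 0, sn η)) :=
  (measurable_pi_apply 0).prodMk measurable_sn

lemma mp_Tsk (h1 : MeasurePreserving (sz 1) μ μ)
    (hiid : iIndepFun (fun i (η : ℕ → ℕ) => η i) P)
    (hlaw : ∀ i : ℕ, P.map (fun η : ℕ → ℕ => η i) = ν) :
    MeasurePreserving Tsk (μ.prod P) (μ.prod P) := by
  refine ⟨measurable_Tsk, ?_⟩
  refine (Measure.prod_eq fun A B hA hB => ?_).symm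
  rw [Measure.map_apply measurable_Tsk (hA.prod hB),
    Measure.prod_apply (measurable_Tsk (hA.prod hB))]
  have hsec : ∀ ω, Prod.mk ω ⁻¹' (Tsk ⁻¹' (A ×ˢ B))
      = (fun η : ℕ → ℕ => (η 0, sn η)) ⁻¹' ({k : ℕ | sz k ω ∈ A} ×ˢ B) := fun ω => rfl
  have hmeasset : ∀ ω : ℤ → ℝ, MeasurableSet ({k : ℕ | sz k ω ∈ A} ×ˢ B) :=
    fun ω => MeasurableSet.prod MeasurableSet.of_discrete hB
  have hval : ∀ ω, P (Prod.mk ω ⁻¹' (Tsk ⁻¹' (A ×ˢ B)))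
      = ν {k : ℕ | sz k ω ∈ A} * P B := by
    intro ω
    rw [hsec ω, ← Measure.map_apply measurable_eval0_sn (hmeasset ω),
      law_eval0_tail hiid hlaw, Measure.prod_prod]
  rw [lintegral_congr hval]
  have hnum : Measurable (fun ω => ν {k : ℕ | sz k ω ∈ A}) := by
    have hE : MeasurableSet ((fun q : (ℤ → ℝ) × ℕ => sz q.2 q.1) ⁻¹' A) := measurable_szfun hA
    exact measurable_measure_prodMk_left hE
  rw [lintegral_mul_const _ hnum]
  have hind : ∀ ω, ν {k : ℕ | sz k ω ∈ A} = ∫⁻ k, A.indicator 1 (sz k ω) ∂ν := by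
    intro ω
    rw [← lintegral_indicator_one MeasurableSet.of_discrete]
    refine lintegral_congr fun k => ?_
    by_cases h : sz k ω ∈ A <;> simp [Set.indicator, h]
  rw [lintegral_congr hind]
  have hswap : ∫⁻ ω, ∫⁻ k, A.indicator 1 (sz k ω) ∂ν ∂μ
      = ∫⁻ k, ∫⁻ ω, A.indicator 1 (sz k ω) ∂μ ∂ν := by
    refine lintegral_lintegral_swap ?_
    exact ((measurable_one.indicator hA).comp measurable_szfun).aemeasurable
  rw [hswap]
  have hper : ∀ k : ℕ, ∫⁻ ω, A.indicator 1 (sz k ω) ∂μ = μ A := by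
    intro k
    rw [(mp_sz h1 (k : ℤ)).lintegral_comp (measurable_one.indicator hA),
      lintegral_indicator_one hA]
  rw [lintegral_congr hper, lintegral_const]
  simp [measure_univ]

lemma harmonic
    (hiid : iIndepFun (fun i (η : ℕ → ℕ) => η i) P)
    (hlaw : ∀ i : ℕ, P.map (fun η : ℕ → ℕ => η i) = ν)
    {s : Set ((ℤ → ℝ) × (ℕ → ℕ))} (hs : MeasurableSet s) (hst : Tsk ⁻¹' s = s)
    (ω : ℤ → ℝ) :
    P (Prod.mk ω ⁻¹' s) = ∫⁻ k, P (Prod.mk (sz k ω) ⁻¹' s) ∂ν := by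
  conv_lhs => rw [← hst]
  have hWm : MeasurableSet ((fun q : ℕ × (ℕ → ℕ) => (sz q.1 ω, q.2)) ⁻¹' s) := by
    have h1 : Measurable (fun q : ℕ × (ℕ → ℕ) => sz (q.1 : ℤ) ω) := by
      exact (measurable_of_countable (fun k : ℕ => sz (k : ℤ) ω)).comp measurable_fst
    exact (h1.prodMk measurable_snd) hs
  have h1 : Prod.mk ω ⁻¹' (Tsk ⁻¹' s)
      = (fun η : ℕ → ℕ => (η 0, sn η)) ⁻¹' ((fun q : ℕ × (ℕ → ℕ) => (sz q.1 ω, q.2)) ⁻¹' s) :=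
    rfl
  rw [h1, ← Measure.map_apply measurable_eval0_sn hWm, law_eval0_tail hiid hlaw,
    Measure.prod_apply hWm]
  exact lintegral_congr fun k => rfl

end MP

section Analytic
variable {μ : Measure (ℤ → ℝ)} [IsProbabilityMeasure μ] {ν : Measure ℕ}
  [IsProbabilityMeasure ν]

lemma integrable_of_bdd {α : Type*} [MeasurableSpace α] {m : Measure α} [IsFiniteMeasure m]
    {g : α → ℝ} (hg : Measurable g) (hb : ∀ x, |g x| ≤ 1) : Integrable g m :=
  Integrable.mono' (integrable_const 1) hg.aestronglyMeasurable
    (Filter.Eventually.of_forall fun x => by simpa using hb x)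

lemma ae_invariant_of_harmonic (h1 : MeasurePreserving (sz 1) μ μ)
    {h : (ℤ → ℝ) → ℝ} (hm : Measurable h) (h0 : ∀ ω, 0 ≤ h ω) (hb : ∀ ω, h ω ≤ 1)
    (hharm : ∀ ω, ∫ k, h (sz k ω) ∂ν = h ω)
    {k : ℕ} (hk : ν {k} ≠ 0) : (fun ω => h (sz (k : ℤ) ω)) =ᵐ[μ] h := by
  have hG : Measurable (fun q : ℕ × (ℤ → ℝ) => h (sz (q.1 : ℤ) q.2)) := by
    have h2 : Measurable (fun q : (ℤ → ℝ) × ℕ => h (sz (q.2 : ℤ) q.1)) := by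
      apply measurable_from_prod_countable_left
      intro j
      exact hm.comp (measurable_sz (j : ℤ))
    exact h2.comp measurable_swap
  set g : ℕ × (ℤ → ℝ) → ℝ := fun q => (h (sz (q.1 : ℤ) q.2) - h q.2)^2 with hgdef
  have hgm : Measurable g := (hG.sub (hm.comp measurable_snd)).pow_const 2
  have hgb : ∀ q, |g q| ≤ 1 := by
    intro q
    have a1 := h0 (sz (q.1 : ℤ) q.2); have a2 := hb (sz (q.1 : ℤ) q.2)
    have a3 := h0 q.2; have a4 := hb q.2
    show |(h (sz (q.1 : ℤ) q.2) - h q.2) ^ 2| ≤ 1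
    rw [abs_of_nonneg (sq_nonneg _)]
    nlinarith
  have hgint : Integrable g (ν.prod μ) := integrable_of_bdd hgm hgb
  -- the integral of g is zero
  have hintzero : ∫ q, g q ∂(ν.prod μ) = 0 := by
    rw [integral_prod _ hgint]
    have hsq_int : Integrable (fun ω => h ω ^ 2) μ := by
      refine integrable_of_bdd (hm.pow_const 2) fun ω => ?_
      rw [abs_of_nonneg (sq_nonneg _)]
      nlinarith [h0 ω, hb ω]
    have hinner : ∀ j : ℕ, ∫ ω, g (j, ω) ∂μ
        = 2 * ∫ ω, h ω ^ 2 ∂μ - 2 * ∫ ω, h (sz (j : ℤ) ω) * h ω ∂μ := by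
      intro j
      have i1 : Integrable (fun ω => h (sz (j : ℤ) ω) ^ 2) μ := by
        refine integrable_of_bdd ((hm.comp (measurable_sz _)).pow_const 2) fun ω => ?_
        rw [abs_of_nonneg (sq_nonneg _)]
        nlinarith [h0 (sz (j : ℤ) ω), hb (sz (j : ℤ) ω)]
      have i2 : Integrable (fun ω => h (sz (j : ℤ) ω) * h ω) μ := by
        refine integrable_of_bdd ((hm.comp (measurable_sz _)).mul hm) fun ω => ?_
        rw [abs_of_nonneg (mul_nonneg (h0 _) (h0 _))]
        nlinarith [h0 (sz (j : ℤ) ω), hb (sz (j : ℤ) ω), h0 ω, hb ω]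
      have hexp : ∀ ω, g (j, ω)
          = (h (sz (j : ℤ) ω) ^ 2 - 2 * (h (sz (j : ℤ) ω) * h ω)) + h ω ^ 2 := by
        intro ω; rw [hgdef]; ring
      have i2' : Integrable (fun ω => 2 * (h (sz (j : ℤ) ω) * h ω)) μ := i2.const_mul 2
      have i12 : Integrable
          (fun ω => h (sz (j : ℤ) ω) ^ 2 - 2 * (h (sz (j : ℤ) ω) * h ω)) μ := i1.sub i2'
      rw [integral_congr_ae (Filter.Eventually.of_forall hexp),
        integral_add i12 hsq_int, integral_sub i1 i2', integral_const_mul]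
      have hmp : ∫ ω, h (sz (j : ℤ) ω) ^ 2 ∂μ = ∫ ω, h ω ^ 2 ∂μ := by
        exact (mp_sz h1 (j : ℤ)).integral_comp (szE (j : ℤ)).measurableEmbedding
          (fun ω => h ω ^ 2)
      rw [hmp]; ring
    rw [integral_congr_ae (Filter.Eventually.of_forall hinner)]
    have icross : Integrable (fun j : ℕ => ∫ ω, h (sz (j : ℤ) ω) * h ω ∂μ) ν := by
      refine integrable_of_bdd (measurable_of_countable _) fun j => ?_
      have hbnd : ‖∫ ω, h (sz (j : ℤ) ω) * h ω ∂μ‖ ≤ 1 * (μ univ).toReal :=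
        norm_integral_le_of_norm_le_const (Filter.Eventually.of_forall fun ω => by
          rw [Real.norm_eq_abs, abs_of_nonneg (mul_nonneg (h0 _) (h0 _))]
          nlinarith [h0 (sz (j : ℤ) ω), hb (sz (j : ℤ) ω), h0 ω, hb ω])
      rw [Real.norm_eq_abs] at hbnd
      simpa [measure_univ] using hbnd
    have iB : Integrable (fun j : ℕ => 2 * ∫ ω, h (sz (j : ℤ) ω) * h ω ∂μ) ν :=
      icross.const_mul 2
    rw [integral_sub (integrable_const _) iB, integral_const, integral_const_mul]
    have hswap : ∫ j : ℕ, ∫ ω, h (sz (j : ℤ) ω) * h ω ∂μ ∂ν = ∫ ω, h ω ^ 2 ∂μ := by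
      have hint2 : Integrable (Function.uncurry fun (j : ℕ) (ω : ℤ → ℝ) =>
          h (sz (j : ℤ) ω) * h ω) (ν.prod μ) := by
        refine integrable_of_bdd (hG.mul (hm.comp measurable_snd)) fun q => ?_
        show |h (sz (q.1 : ℤ) q.2) * h q.2| ≤ 1
        rw [abs_of_nonneg (mul_nonneg (h0 _) (h0 _))]
        nlinarith [h0 (sz (q.1 : ℤ) q.2), hb (sz (q.1 : ℤ) q.2), h0 q.2, hb q.2]
      rw [integral_integral_swap hint2]
      have : ∀ ω, ∫ j : ℕ, h (sz (j : ℤ) ω) * h ω ∂ν = h ω ^ 2 := by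
        intro ω
        rw [integral_mul_const, hharm ω]; ring
      rw [integral_congr_ae (Filter.Eventually.of_forall this)]
    rw [hswap]
    simp [measure_univ]
  have hae : g =ᵐ[ν.prod μ] 0 :=
    (integral_eq_zero_iff_of_nonneg (fun q => sq_nonneg _) hgint).1 hintzero
  have hnull : (ν.prod μ) {q | g q ≠ 0} = 0 := by
    have := hae
    rw [Filter.EventuallyEq, ae_iff] at this
    simpa using this
  have hNmeas : MeasurableSet {q : ℕ × (ℤ → ℝ) | g q ≠ 0} :=
    (hgm (measurableSet_singleton 0)).compl
  rw [Measure.measure_prod_null hNmeas] at hnull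
  have hatk : μ (Prod.mk k ⁻¹' {q : ℕ × (ℤ → ℝ) | g q ≠ 0}) = 0 := by
    by_contra hne
    rw [Filter.EventuallyEq, ae_iff] at hnull
    refine hk (measure_mono_null ?_ hnull)
    intro x hx
    simp only [Set.mem_singleton_iff] at hx
    subst hx
    simpa using hne
  rw [Filter.EventuallyEq, ae_iff]
  refine measure_mono_null ?_ hatk
  intro ω hω
  simp only [Set.mem_setOf_eq, Set.mem_preimage] at hω ⊢
  intro hzero
  rw [hgdef] at hzero
  simp only at hzero
  apply hω
  have hd : h (sz (k : ℤ) ω) - h ω = 0 := by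
    have := sq_nonneg (h (sz (k : ℤ) ω) - h ω)
    nlinarith [hzero]
  linarith [hd]

lemma pullback_ae_eq (h1 : MeasurePreserving (sz 1) μ μ) (z : ℤ)
    {f g : (ℤ → ℝ) → ℝ≥0∞} (hfg : f =ᵐ[μ] g) :
    (fun ω => f (sz z ω)) =ᵐ[μ] (fun ω => g (sz z ω)) := by
  rw [Filter.EventuallyEq, ae_iff] at hfg ⊢
  refine measure_mono_null ?_ ((mp_sz h1 z).quasiMeasurePreserving.preimage_null hfg)
  intro ω hω
  exact hω

lemma pullback_ae_eq' (h1 : MeasurePreserving (sz 1) μ μ) (z : ℤ)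
    {f g : (ℤ → ℝ) → ℝ} (hfg : f =ᵐ[μ] g) :
    (fun ω => f (sz z ω)) =ᵐ[μ] (fun ω => g (sz z ω)) := by
  rw [Filter.EventuallyEq, ae_iff] at hfg ⊢
  refine measure_mono_null ?_ ((mp_sz h1 z).quasiMeasurePreserving.preimage_null hfg)
  intro ω hω
  exact hω

lemma invariant_one (h1 : MeasurePreserving (sz 1) μ μ)
    {h : (ℤ → ℝ) → ℝ}
    (hinv : ∀ k : ℕ, ν {k} ≠ 0 → (fun ω => h (sz (k : ℤ) ω)) =ᵐ[μ] h)
    (hgcd : ∀ m : ℕ, (∀ k : ℕ, ν {k} ≠ 0 → m ∣ k) → m = 1) :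
    (fun ω => h (sz 1 ω)) =ᵐ[μ] h := by
  classical
  set G : AddSubgroup ℤ :=
    { carrier := {z : ℤ | (fun ω => h (sz z ω)) =ᵐ[μ] h}
      zero_mem' := by
        have : (fun ω => h (sz 0 ω)) = h := by funext ω; rw [sz_zero]
        simp only [Set.mem_setOf_eq, this]
        exact Filter.EventuallyEq.refl _ _
      add_mem' := by
        intro a b ha hb
        simp only [Set.mem_setOf_eq] at ha hb ⊢
        have hcomp : (fun ω => h (sz (a + b) ω)) = fun ω => h (sz a (sz b ω)) := by
          funext ω; rw [sz_sz]
        rw [hcomp]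
        exact (pullback_ae_eq' h1 b ha).trans hb
      neg_mem' := by
        intro a ha
        simp only [Set.mem_setOf_eq] at ha ⊢
        rw [Filter.EventuallyEq, ae_iff] at ha ⊢
        have hset : {ω | ¬ h (sz (-a) ω) = h ω} = sz (-a) ⁻¹' {ω | ¬ h (sz a ω) = h ω} := by
          ext ω
          simp only [Set.mem_setOf_eq, Set.mem_preimage]
          have : sz a (sz (-a) ω) = ω := by rw [sz_sz]; simp [sz_zero]
          rw [this]
          exact ⟨fun hne => fun he => hne he.symm, fun hne => fun he => hne he.symm⟩
        rw [hset]
        exact (mp_sz h1 (-a)).quasiMeasurePreserving.preimage_null ha } with hGdef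
  obtain ⟨a, haG⟩ := Int.subgroup_cyclic G
  have hdvd : ∀ k : ℕ, ν {k} ≠ 0 → a.natAbs ∣ k := by
    intro k hk
    have hmem : (k : ℤ) ∈ G := hinv k hk
    rw [haG, AddSubgroup.mem_closure_singleton] at hmem
    obtain ⟨n, hn⟩ := hmem
    have : a ∣ (k : ℤ) := by rw [← hn, zsmul_eq_mul]; exact dvd_mul_left a n
    have h2 := Int.natAbs_dvd_natAbs.2 this
    simpa using h2
  have hone : a.natAbs = 1 := hgcd a.natAbs hdvd
  have h1G : (1 : ℤ) ∈ G := by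
    rw [haG, AddSubgroup.mem_closure_singleton]
    rcases Int.natAbs_eq_iff.1 hone with h | h
    · exact ⟨1, by rw [h]; simp⟩
    · exact ⟨-1, by rw [h]; simp⟩
  exact h1G

end Analytic

def sumP {n : ℕ} (p : Fin n → ℕ) : ℤ := ∑ i, (p i : ℤ)

lemma iter_preimage {s : Set ((ℤ → ℝ) × (ℕ → ℕ))} (hst : Tsk ⁻¹' s = s) (n : ℕ) :
    (Tsk^[n]) ⁻¹' s = s := by
  induction n with
  | zero => rfl
  | succ n ih => rw [Function.iterate_succ, Set.preimage_comp, ih, hst]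

section Key
variable {μ : Measure (ℤ → ℝ)} [IsProbabilityMeasure μ] {P : Measure (ℕ → ℕ)}
  [IsProbabilityMeasure P] {ν : Measure ℕ} [IsProbabilityMeasure ν]

lemma key_rect (h1 : MeasurePreserving (sz 1) μ μ)
    (hiid : iIndepFun (fun i (η : ℕ → ℕ) => η i) P)
    (hlaw : ∀ i : ℕ, P.map (fun η : ℕ → ℕ => η i) = ν)
    {s : Set ((ℤ → ℝ) × (ℕ → ℕ))} (hs : MeasurableSet s) (hst : Tsk ⁻¹' s = s)
    {c : ℝ≥0∞} (hc : (fun ω => P (Prod.mk ω ⁻¹' s)) =ᵐ[μ] fun _ => c)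
    (n : ℕ) {A : Set (ℤ → ℝ)} (hA : MeasurableSet A) (S : Set (Fin n → ℕ)) :
    (μ.prod P) (s ∩ A ×ˢ (pre n ⁻¹' S)) = c * ((μ.prod P) (A ×ˢ (pre n ⁻¹' S))) := by
  set H : (ℤ → ℝ) → ℝ≥0∞ := fun ω => P (Prod.mk ω ⁻¹' s) with hHdef
  set piν := Measure.pi (fun _ : Fin n => ν) with hpiν
  have hSm : MeasurableSet S := MeasurableSet.of_discrete
  have hBm : MeasurableSet (pre n ⁻¹' S) := measurable_pre n hSm
  have hEm : MeasurableSet (s ∩ A ×ˢ (pre n ⁻¹' S)) := hs.inter (hA.prod hBm)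
  have hWm : ∀ ω : ℤ → ℝ, MeasurableSet
      {q : (Fin n → ℕ) × (ℕ → ℕ) | q.1 ∈ S ∧ (sz (sumP q.1) ω, q.2) ∈ s} := by
    intro ω
    have hf1 : Measurable (fun q : (Fin n → ℕ) × (ℕ → ℕ) => sz (sumP q.1) ω) := by
      exact (measurable_of_countable (fun p : Fin n → ℕ => sz (sumP p) ω)).comp measurable_fst
    have hmap : Measurable (fun q : (Fin n → ℕ) × (ℕ → ℕ) => (sz (sumP q.1) ω, q.2)) :=
      hf1.prodMk measurable_snd
    exact (measurable_fst hSm).inter (hmap hs)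
  have hsec : ∀ ω, P (Prod.mk ω ⁻¹' (s ∩ A ×ˢ (pre n ⁻¹' S)))
      = A.indicator (fun ω' => ∫⁻ p, S.indicator (fun p' => H (sz (sumP p') ω')) p ∂piν) ω := by
    intro ω
    by_cases hωA : ω ∈ A
    · rw [Set.indicator_of_mem hωA]
      have hsetd : Prod.mk ω ⁻¹' (s ∩ A ×ˢ (pre n ⁻¹' S))
          = (fun η => (pre n η, sn^[n] η)) ⁻¹'
            {q : (Fin n → ℕ) × (ℕ → ℕ) | q.1 ∈ S ∧ (sz (sumP q.1) ω, q.2) ∈ s} := by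
        ext η
        simp only [Set.mem_preimage, Set.mem_inter_iff, Set.mem_prod, Set.mem_setOf_eq]
        constructor
        · rintro ⟨hηs, -, hηB⟩
          refine ⟨hηB, ?_⟩
          have h2 : (ω, η) ∈ (Tsk^[n]) ⁻¹' s := by rw [iter_preimage hst n]; exact hηs
          rw [Set.mem_preimage, Tsk_iter] at h2
          have h3 : Ssum n η = sumP (pre n η) := Ssum_pre n η
          rwa [h3] at h2
        · rintro ⟨hηB, hq⟩
          refine ⟨?_, hωA, hηB⟩
          rw [← iter_preimage hst n, Set.mem_preimage, Tsk_iter]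
          have h3 : Ssum n η = sumP (pre n η) := Ssum_pre n η
          rw [h3]
          exact hq
      rw [hsetd, ← Measure.map_apply ((measurable_pre n).prodMk (measurable_sn.iterate n))
        (hWm ω), law_pre_tail hiid hlaw n, ← hpiν, Measure.prod_apply (hWm ω)]
      refine lintegral_congr fun p => ?_
      by_cases hpS : p ∈ S
      · rw [Set.indicator_of_mem hpS]
        have hseceq : Prod.mk p ⁻¹'
            {q : (Fin n → ℕ) × (ℕ → ℕ) | q.1 ∈ S ∧ (sz (sumP q.1) ω, q.2) ∈ s}
            = Prod.mk (sz (sumP p) ω) ⁻¹' s := by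
          ext η'
          simp [hpS]
        rw [hseceq]
      · rw [Set.indicator_of_notMem hpS]
        have hempty : Prod.mk p ⁻¹'
            {q : (Fin n → ℕ) × (ℕ → ℕ) | q.1 ∈ S ∧ (sz (sumP q.1) ω, q.2) ∈ s} = ∅ := by
          ext η'
          simp [hpS]
        rw [hempty]
        simp
    · rw [Set.indicator_of_notMem hωA]
      have hempty : Prod.mk ω ⁻¹' (s ∩ A ×ˢ (pre n ⁻¹' S)) = ∅ := by
        ext η
        simp [hωA]
      rw [hempty]
      simp
  rw [Measure.prod_apply hEm, lintegral_congr hsec, lintegral_indicator hA]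
  have hHm : Measurable H := measurable_measure_prodMk_left hs
  have hswap : ∫⁻ ω in A, ∫⁻ p, S.indicator (fun p' => H (sz (sumP p') ω)) p ∂piν ∂μ
      = ∫⁻ p, ∫⁻ ω in A, S.indicator (fun p' => H (sz (sumP p') ω)) p ∂μ ∂piν := by
    refine lintegral_lintegral_swap ?_
    have hmeas : Measurable (fun q : (ℤ → ℝ) × (Fin n → ℕ) =>
        S.indicator (fun p' => H (sz (sumP p') q.1)) q.2) := by
      apply measurable_from_prod_countable_left
      intro p
      by_cases hpS : p ∈ S
      · simpa [Set.indicator_of_mem hpS, Function.comp_def] using (hHm.comp (measurable_sz (sumP p)))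
      · simpa [Set.indicator_of_notMem hpS] using measurable_const
    exact hmeas.aemeasurable
  rw [hswap]
  have hinner : ∀ p : Fin n → ℕ, ∫⁻ ω in A, S.indicator (fun p' => H (sz (sumP p') ω)) p ∂μ
      = S.indicator (fun _ => c * μ A) p := by
    intro p
    by_cases hpS : p ∈ S
    · rw [Set.indicator_of_mem hpS]
      have hptw : ∀ ω, S.indicator (fun p' => H (sz (sumP p') ω)) p = H (sz (sumP p) ω) :=
        fun ω => Set.indicator_of_mem hpS _
      rw [lintegral_congr hptw]
      have hHc : (fun ω => H (sz (sumP p) ω)) =ᵐ[μ] fun _ => c := pullback_ae_eq h1 (sumP p) hc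
      rw [lintegral_congr_ae (ae_restrict_of_ae hHc), setLIntegral_const]
    · rw [Set.indicator_of_notMem hpS]
      have hptw : ∀ ω, S.indicator (fun p' => H (sz (sumP p') ω)) p = 0 :=
        fun ω => Set.indicator_of_notMem hpS _
      rw [lintegral_congr hptw]
      simp
  rw [lintegral_congr hinner, lintegral_indicator_const hSm]
  have hPB : P (pre n ⁻¹' S) = piν S := by
    have h0 : pre n ⁻¹' S = (fun (η : ℕ → ℕ) (i : Fin n) => η ((i : ℕ))) ⁻¹' S := rfl
    rw [h0, ← Measure.map_apply (measurable_pi_lambda _ fun i => measurable_pi_apply _) hSm,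
      map_sub_pi hiid hlaw (fun i : Fin n => (i : ℕ)) Fin.val_injective, hpiν]
  rw [Measure.prod_prod, hPB]
  ring

end Key

end Stmt13
end


/-- Let `μ` be a shift-ergodic probability measure on `Ω = ℝ^ℤ`, and let `P` be a
probability measure on `Ξ = ℕ^ℕ` making the coordinates i.i.d. positive integers with finite
expectation and with `gcd{k : P(η₁ = k) > 0} = 1`. Then the skew transformation
`T(ω,η) = (τ_{η₁}ω, shift η)` is ergodic (in particular measure preserving) for `μ ⊗ P`. -/
theorem stmt13 (μ : Measure (ℤ → ℝ)) [IsProbabilityMeasure μ]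
    (hshift : Ergodic (fun ω : ℤ → ℝ => fun k => ω (k + 1)) μ)
    (P : Measure (ℕ → ℕ)) [IsProbabilityMeasure P] (ν : Measure ℕ) [IsProbabilityMeasure ν]
    (hiid : ProbabilityTheory.iIndepFun
      (fun i (η : ℕ → ℕ) => η i) P)
    (hlaw : ∀ i : ℕ, P.map (fun η : ℕ → ℕ => η i) = ν)
    (hpos : ν {0} = 0)
    (hmean : ∫⁻ k, (k : ENNReal) ∂ν < ⊤)
    (hgcd : ∀ m : ℕ, (∀ k : ℕ, ν {k} ≠ 0 → m ∣ k) → m = 1) :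
    Ergodic (fun p : (ℤ → ℝ) × (ℕ → ℕ) =>
        ((fun k : ℤ => p.1 (k + p.2 0)), fun n : ℕ => p.2 (n + 1)))
      (μ.prod P) := by
  have h1 : MeasurePreserving (Stmt13.sz 1) μ μ := hshift.toMeasurePreserving
  have hmp : MeasurePreserving Stmt13.Tsk (μ.prod P) (μ.prod P) :=
    Stmt13.mp_Tsk h1 hiid hlaw
  refine ⟨hmp, ?_⟩
  refine ⟨fun s hs hsinv => ?_⟩
  have hst : Stmt13.Tsk ⁻¹' s = s := hsinv
  -- the section measure function
  have hHm : Measurable (fun ω => P (Prod.mk ω ⁻¹' s)) := measurable_measure_prodMk_left hs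
  have hH1 : ∀ ω : ℤ → ℝ, P (Prod.mk ω ⁻¹' s) ≤ 1 := fun ω => prob_le_one
  have hHtop : ∀ ω : ℤ → ℝ, P (Prod.mk ω ⁻¹' s) ≠ ⊤ :=
    fun ω => ((hH1 ω).trans_lt ENNReal.one_lt_top).ne
  have hharm : ∀ ω : ℤ → ℝ, P (Prod.mk ω ⁻¹' s)
      = ∫⁻ k, P (Prod.mk (Stmt13.sz (k : ℤ) ω) ⁻¹' s) ∂ν :=
    Stmt13.harmonic hiid hlaw hs hst
  set h : (ℤ → ℝ) → ℝ := fun ω => (P (Prod.mk ω ⁻¹' s)).toReal with hhdef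
  have hhm : Measurable h := hHm.ennreal_toReal
  have h0 : ∀ ω, 0 ≤ h ω := fun ω => ENNReal.toReal_nonneg
  have hb : ∀ ω, h ω ≤ 1 := by
    intro ω
    have := ENNReal.toReal_mono (by norm_num : (1 : ℝ≥0∞) ≠ ⊤) (hH1 ω)
    simpa using this
  have hharmR : ∀ ω, ∫ k, h (Stmt13.sz (k : ℤ) ω) ∂ν = h ω := by
    intro ω
    have hint : ∫ k, h (Stmt13.sz (k : ℤ) ω) ∂ν
        = (∫⁻ k, P (Prod.mk (Stmt13.sz (k : ℤ) ω) ⁻¹' s) ∂ν).toReal := by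
      rw [← integral_toReal ((measurable_of_countable _).aemeasurable)
        (Filter.Eventually.of_forall fun k => (hH1 _).trans_lt ENNReal.one_lt_top)]
    rw [hint, ← hharm ω]
  have hinv : ∀ k : ℕ, ν {k} ≠ 0 → (fun ω => h (Stmt13.sz (k : ℤ) ω)) =ᵐ[μ] h :=
    fun k hk => Stmt13.ae_invariant_of_harmonic h1 hhm h0 hb hharmR hk
  have hone : (fun ω => h (Stmt13.sz 1 ω)) =ᵐ[μ] h := Stmt13.invariant_one h1 hinv hgcd
  have herg : Ergodic (Stmt13.sz 1) μ := hshift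
  obtain ⟨c, hc⟩ := herg.ae_eq_const_of_ae_eq_comp₀ hhm.nullMeasurable hone
  set cE : ℝ≥0∞ := ENNReal.ofReal c with hcE
  have hcEtop : cE ≠ ⊤ := ENNReal.ofReal_ne_top
  have hcH : (fun ω => P (Prod.mk ω ⁻¹' s)) =ᵐ[μ] (fun _ => cE) := by
    filter_upwards [hc] with ω hω
    rw [← ENNReal.ofReal_toReal (hHtop ω)]
    have : (P (Prod.mk ω ⁻¹' s)).toReal = c := hω
    rw [this]
  have hms : (μ.prod P) s = cE := by
    rw [Measure.prod_apply hs, lintegral_congr_ae hcH, lintegral_const, measure_univ, mul_one]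
  have hcE1 : cE ≤ 1 := by
    have hne : (ae μ).NeBot := ae_neBot.2 (IsProbabilityMeasure.ne_zero μ)
    obtain ⟨ω₀, hω₀⟩ := hcH.exists
    have h2 : cE = P (Prod.mk ω₀ ⁻¹' s) := hω₀.symm
    rw [h2]
    exact hH1 ω₀
  -- extension to all measurable sets
  have hcoe : ((cE.toNNReal : ℝ≥0) : ℝ≥0∞) = cE := ENNReal.coe_toNNReal hcEtop
  have hext : (μ.prod P).restrict s = (cE.toNNReal : ℝ≥0) • (μ.prod P) := by
    have hcylspan : IsCountablySpanning Stmt13.cylSet := by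
      refine ⟨fun _ => Set.univ, fun _ => ⟨0, Set.univ, by rw [Set.preimage_univ]⟩,
        Set.iUnion_const _⟩
    refine ext_of_generate_finite
      (Set.image2 (· ×ˢ ·) {A : Set (ℤ → ℝ) | MeasurableSet A} Stmt13.cylSet)
      ?_ ?_ ?_ ?_
    · exact (generateFrom_eq_prod generateFrom_measurableSet Stmt13.generateFrom_cyl
        isCountablySpanning_measurableSet hcylspan).symm
    · rintro t1 ⟨A1, hA1, B1, hB1, rfl⟩ t2 ⟨A2, hA2, B2, hB2, rfl⟩ hne
      rw [Set.prod_inter_prod]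
      rw [Set.prod_inter_prod] at hne
      obtain ⟨q, hq⟩ := hne
      refine Set.mem_image2_of_mem ((show MeasurableSet A1 from hA1).inter (show MeasurableSet A2 from hA2)) ?_
      exact Stmt13.isPiSystem_cyl B1 hB1 B2 hB2 ⟨q.2, hq.2⟩
    · rintro t ⟨A, hA, B, ⟨n, S, rfl⟩, rfl⟩
      have hBm : MeasurableSet (Stmt13.pre n ⁻¹' S) :=
        Stmt13.measurable_pre n MeasurableSet.of_discrete
      rw [Measure.restrict_apply ((show MeasurableSet A from hA).prod hBm), Set.inter_comm,
        Stmt13.key_rect h1 hiid hlaw hs hst hcH n (show MeasurableSet A from hA) S,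
        Measure.smul_apply, ENNReal.smul_def, hcoe, smul_eq_mul]
    · rw [Measure.restrict_apply MeasurableSet.univ, Set.univ_inter, hms,
        Measure.smul_apply, ENNReal.smul_def, hcoe, smul_eq_mul, measure_univ, mul_one]
  have hself : cE = cE * cE := by
    have e1 : (μ.prod P) s = ((μ.prod P).restrict s) s := by
      rw [Measure.restrict_apply hs, Set.inter_self]
    rw [hms] at e1
    rw [hext, Measure.smul_apply, ENNReal.smul_def, hcoe, smul_eq_mul, hms] at e1
    exact e1
  rw [Filter.eventuallyConst_set]
  rcases eq_or_ne cE 0 with h0c | h0c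
  · exact Or.inr (measure_eq_zero_iff_ae_notMem.1 (hms.trans h0c))
  · refine Or.inl ?_
    have hc1 : cE = 1 := by
      have h2 : cE * 1 = cE * cE := by rw [mul_one]; exact hself
      exact ((ENNReal.mul_right_inj h0c hcEtop).1 h2).symm
    have hcompl : (μ.prod P) sᶜ = 0 := by
      rw [measure_compl hs (measure_ne_top _ s), hms, hc1, measure_univ, tsub_self]
    exact mem_ae_iff.2 (by simpa using hcompl)
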